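/- Let H be an n×n Hermitian matrix written in block form H = [[A, B], [B*, C]] where A is an m×m principal submatrix (m ≤ n). Then for every 1 ≤ i ≤ m, λ_{n-m+i}(H) ≤ λ_i(A) ≤ λ_i(H), where λ_j denotes the j-th largest eigenvalue. -/

import Mathlib

open Matrix Finset Module

noncomputable section CauchyAux

local notation "⟪" x ", " y "⟫" => @inner ℂ _ _ x y

variable {m n : ℕ}

/-- Extension by zero as a linear map between Euclidean spaces. -/
def emb (hmn : m ≤ n) : EuclideanSpace ℂ (Fin m) →ₗ[ℂ] EuclideanSpace ℂ (Fin n) where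
  toFun y := WithLp.toLp 2 (fun k : Fin n => if h : (k : ℕ) < m then y ⟨k, h⟩ else 0)
  map_add' a b := by
    apply PiLp.ext; intro k
    by_cases h : (k : ℕ) < m <;> simp [h]
  map_smul' c a := by
    apply PiLp.ext; intro k
    by_cases h : (k : ℕ) < m <;> simp [h]

lemma emb_apply (hmn : m ≤ n) (y : EuclideanSpace ℂ (Fin m)) (k : Fin n) :
    emb hmn y k = if h : (k : ℕ) < m then y ⟨k, h⟩ else 0 := rfl

lemma emb_castLE (hmn : m ≤ n) (y : EuclideanSpace ℂ (Fin m)) (j : Fin m) :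
    emb hmn y (Fin.castLE hmn j) = y j := by
  simp [emb_apply, j.isLt]

lemma sum_transfer {M : Type*} [AddCommMonoid M] (hmn : m ≤ n) (F : Fin n → M)
    (hF : ∀ k : Fin n, m ≤ (k : ℕ) → F k = 0) :
    ∑ k, F k = ∑ j : Fin m, F (Fin.castLE hmn j) := by
  rw [show (∑ j : Fin m, F (Fin.castLE hmn j)) = ∑ j, F ((Fin.castLEEmb hmn) j) from rfl,
    ← Finset.sum_map Finset.univ (Fin.castLEEmb hmn) F]
  refine (Finset.sum_subset (Finset.subset_univ _) ?_).symm
  intro k _ hk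
  refine hF k ?_
  by_contra h
  push_neg at h
  exact hk (Finset.mem_map.2 ⟨⟨k, h⟩, Finset.mem_univ _, rfl⟩)

lemma emb_inner (hmn : m ≤ n) (y z : EuclideanSpace ℂ (Fin m)) :
    ⟪emb hmn y, emb hmn z⟫ = ⟪y, z⟫ := by
  simp only [PiLp.inner_apply, RCLike.inner_apply]
  rw [sum_transfer hmn _ (fun k hk => by
    simp [emb_apply, Nat.not_lt.2 hk])]
  simp [emb_castLE]

lemma emb_injective (hmn : m ≤ n) : Function.Injective (emb hmn) := by
  intro y z h
  apply PiLp.ext; intro j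
  have := congrArg (fun v : EuclideanSpace ℂ (Fin n) => v (Fin.castLE hmn j)) h
  simpa [emb_castLE] using this

lemma emb_norm (hmn : m ≤ n) (y : EuclideanSpace ℂ (Fin m)) : ‖emb hmn y‖ = ‖y‖ := by
  have h : ‖emb hmn y‖ ^ 2 = ‖y‖ ^ 2 := by
    rw [@norm_sq_eq_re_inner ℂ, @norm_sq_eq_re_inner ℂ, emb_inner]
  exact (sq_eq_sq₀ (norm_nonneg _) (norm_nonneg _)).1 h

/-- The quadratic form of `H` on an embedded vector is the quadratic form of the
principal submatrix. -/
lemma emb_quad (hmn : m ≤ n) (H : Matrix (Fin n) (Fin n) ℂ)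
    (y : EuclideanSpace ℂ (Fin m)) :
    ⟪emb hmn y, Matrix.toEuclideanLin H (emb hmn y)⟫ =
      ⟪y, Matrix.toEuclideanLin (H.submatrix (Fin.castLE hmn) (Fin.castLE hmn)) y⟫ := by
  simp only [PiLp.inner_apply, RCLike.inner_apply, toEuclideanLin_apply]
  rw [sum_transfer hmn _ (fun k hk => by
    simp [emb_apply, Nat.not_lt.2 hk])]
  refine Finset.sum_congr rfl fun j _ => ?_
  congr 1
  · show (H *ᵥ (emb hmn y)) (Fin.castLE hmn j) = _
    show _ = ((H.submatrix (Fin.castLE hmn) (Fin.castLE hmn)) *ᵥ y) j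
    simp only [mulVec, dotProduct, submatrix_apply]
    rw [sum_transfer hmn _ (fun k hk => by
      simp [emb_apply, Nat.not_lt.2 hk])]
    refine Finset.sum_congr rfl fun l _ => ?_
    rw [emb_castLE]
  · rw [emb_castLE]

end CauchyAux

open Matrix Finset Module

noncomputable section CauchyAux2

local notation "⟪" x ", " y "⟫" => @inner ℂ _ _ x y

variable {E : Type*} [NormedAddCommGroup E] [InnerProductSpace ℂ E]
variable {ι : Type*} [Fintype ι] [DecidableEq ι]

lemma repr_eq_zero_of_not_mem (b : OrthonormalBasis ι ℂ E) (s : Finset ι)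
    {x : E} (hx : x ∈ Submodule.span ℂ (⇑b '' s)) {j : ι} (hj : j ∉ s) :
    b.repr x j = 0 := by
  rw [b.repr_apply_apply]
  have hle : Submodule.span ℂ (⇑b '' s) ≤ LinearMap.ker (innerSL ℂ (b j)).toLinearMap := by
    rw [Submodule.span_le]
    rintro _ ⟨i, hi, rfl⟩
    simp only [SetLike.mem_coe, LinearMap.mem_ker, ContinuousLinearMap.coe_coe, innerSL_apply_apply]
    exact b.orthonormal.2 (fun h => hj (h ▸ hi))
  exact hle hx

lemma norm_sq_eq_sum_repr (b : OrthonormalBasis ι ℂ E) (x : E) :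
    ‖x‖ ^ 2 = ∑ j, ‖b.repr x j‖ ^ 2 := by
  rw [← b.repr.norm_map x, EuclideanSpace.norm_eq, Real.sq_sqrt (by positivity)]

lemma quad_eq {N : ℕ} (M : Matrix (Fin N) (Fin N) ℂ) (hM : M.IsHermitian)
    (x : EuclideanSpace ℂ (Fin N)) :
    RCLike.re ⟪x, Matrix.toEuclideanLin M x⟫ =
      ∑ j, hM.eigenvalues j * ‖hM.eigenvectorBasis.repr x j‖ ^ 2 := by
  set b := hM.eigenvectorBasis with hb
  have hrepr : ∀ j, b.repr (Matrix.toEuclideanLin M x) j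
      = (hM.eigenvalues j : ℂ) * b.repr x j := by
    intro j
    have hsym := (Matrix.isHermitian_iff_isSymmetric.1 hM)
    rw [b.repr_apply_apply, b.repr_apply_apply, ← hsym (b j) x]
    have hbj : Matrix.toEuclideanLin M (b j) = (hM.eigenvalues j : ℂ) • b j := by
      apply PiLp.ext
      intro k
      have := congrFun (hM.mulVec_eigenvectorBasis j) k
      simpa [Matrix.toEuclideanLin_apply] using this
    rw [hbj, inner_smul_left]
    simp
  have h1 : ⟪x, Matrix.toEuclideanLin M x⟫
      = ⟪b.repr x, b.repr (Matrix.toEuclideanLin M x)⟫ := (b.repr.inner_map_map _ _).symm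
  rw [h1, PiLp.inner_apply]
  simp only [RCLike.inner_apply, hrepr]
  rw [map_sum]
  refine Finset.sum_congr rfl fun j _ => ?_
  have : (hM.eigenvalues j : ℂ) * b.repr x j * (starRingEnd ℂ) (b.repr x j)
      = (hM.eigenvalues j : ℂ) * ((starRingEnd ℂ) (b.repr x j) * b.repr x j) := by ring
  have h2 : (starRingEnd ℂ) (b.repr x j) * b.repr x j
      = ((‖b.repr x j‖ ^ 2 : ℝ) : ℂ) := by rw [RCLike.conj_mul]; norm_cast
  rw [this, h2, ← Complex.ofReal_mul]
  exact RCLike.ofReal_re _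

lemma quad_ge {N : ℕ} (M : Matrix (Fin N) (Fin N) ℂ) (hM : M.IsHermitian)
    (s : Finset (Fin N)) (c : ℝ) (hc : ∀ j ∈ s, c ≤ hM.eigenvalues j)
    {x : EuclideanSpace ℂ (Fin N)}
    (hx : x ∈ Submodule.span ℂ (⇑hM.eigenvectorBasis '' s)) :
    c * ‖x‖ ^ 2 ≤ RCLike.re ⟪x, Matrix.toEuclideanLin M x⟫ := by
  rw [quad_eq M hM x, norm_sq_eq_sum_repr hM.eigenvectorBasis x, Finset.mul_sum]
  have hzero : ∀ j ∈ (Finset.univ : Finset (Fin N)), j ∉ s →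
      hM.eigenvectorBasis.repr x j = 0 := fun j _ hj =>
    repr_eq_zero_of_not_mem hM.eigenvectorBasis s hx hj
  rw [← Finset.sum_subset (Finset.subset_univ s) (fun j hj hjs => by
        rw [hzero j hj hjs]; simp),
      ← Finset.sum_subset (Finset.subset_univ s) (fun j hj hjs => by
        rw [hzero j hj hjs]; simp)]
  exact Finset.sum_le_sum fun j hj =>
    mul_le_mul_of_nonneg_right (hc j hj) (by positivity)

lemma quad_le {N : ℕ} (M : Matrix (Fin N) (Fin N) ℂ) (hM : M.IsHermitian)
    (s : Finset (Fin N)) (c : ℝ) (hc : ∀ j ∈ s, hM.eigenvalues j ≤ c)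
    {x : EuclideanSpace ℂ (Fin N)}
    (hx : x ∈ Submodule.span ℂ (⇑hM.eigenvectorBasis '' s)) :
    RCLike.re ⟪x, Matrix.toEuclideanLin M x⟫ ≤ c * ‖x‖ ^ 2 := by
  rw [quad_eq M hM x, norm_sq_eq_sum_repr hM.eigenvectorBasis x, Finset.mul_sum]
  have hzero : ∀ j ∈ (Finset.univ : Finset (Fin N)), j ∉ s →
      hM.eigenvectorBasis.repr x j = 0 := fun j _ hj =>
    repr_eq_zero_of_not_mem hM.eigenvectorBasis s hx hj
  rw [← Finset.sum_subset (Finset.subset_univ s) (fun j hj hjs => by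
        rw [hzero j hj hjs]; simp),
      ← Finset.sum_subset (Finset.subset_univ s) (fun j hj hjs => by
        rw [hzero j hj hjs]; simp)]
  exact Finset.sum_le_sum fun j hj =>
    mul_le_mul_of_nonneg_right (hc j hj) (by positivity)

lemma finrank_span_orthonormal {v : ι → E} (hv : Orthonormal ℂ v) (s : Finset ι) :
    finrank ℂ (Submodule.span ℂ (v '' s)) = s.card := by
  have h1 : LinearIndependent ℂ (fun j : (s : Set ι) => v j) :=
    hv.linearIndependent.comp _ Subtype.val_injective
  have h2 : Set.range (fun j : (s : Set ι) => v j) = v '' s := by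
    rw [← Set.image_eq_range]
  rw [← h2, finrank_span_eq_card h1]
  simp

lemma exists_ne_zero_mem_inf {V : Type*} [NormedAddCommGroup V] [InnerProductSpace ℂ V]
    [FiniteDimensional ℂ V] (S T : Submodule ℂ V)
    (h : finrank ℂ V < finrank ℂ S + finrank ℂ T) :
    ∃ x : V, x ≠ 0 ∧ x ∈ S ∧ x ∈ T := by
  have hsup : finrank ℂ ↥(S ⊔ T) ≤ finrank ℂ V := Submodule.finrank_le _
  have heq := Submodule.finrank_sup_add_finrank_inf_eq S T
  have hpos : 0 < finrank ℂ ↥(S ⊓ T) := by omega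
  obtain ⟨x, hx⟩ := Module.finrank_pos_iff_exists_ne_zero.1 hpos
  exact ⟨x.1, by simpa [Submodule.coe_eq_zero] using hx, x.2.1, x.2.2⟩

end CauchyAux2

noncomputable section CauchyMain

local notation "⟪" x ", " y "⟫" => @inner ℂ _ _ x y

variable {m n : ℕ}

lemma exists_common (hmn : m ≤ n)
    (H : Matrix (Fin n) (Fin n) ℂ) (hH : H.IsHermitian)
    (A : Matrix (Fin m) (Fin m) ℂ) (hA : A.IsHermitian)
    (sA : Finset (Fin m)) (sH : Finset (Fin n)) (hcard : n < sA.card + sH.card) :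
    ∃ y : EuclideanSpace ℂ (Fin m), y ≠ 0 ∧
      y ∈ Submodule.span ℂ (⇑hA.eigenvectorBasis '' sA) ∧
      emb hmn y ∈ Submodule.span ℂ (⇑hH.eigenvectorBasis '' sH) := by
  set bA := hA.eigenvectorBasis
  set bH := hH.eigenvectorBasis
  have hvo : Orthonormal ℂ (fun j => emb hmn (bA j)) := by
    constructor
    · intro j; rw [emb_norm]; exact bA.orthonormal.1 j
    · intro j k hjk; rw [emb_inner]; exact bA.orthonormal.2 hjk
  set S : Submodule ℂ (EuclideanSpace ℂ (Fin n)) :=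
    Submodule.map (emb hmn) (Submodule.span ℂ (⇑bA '' sA)) with hS
  set T : Submodule ℂ (EuclideanSpace ℂ (Fin n)) :=
    Submodule.span ℂ (⇑bH '' sH) with hT
  have hSspan : S = Submodule.span ℂ ((fun j => emb hmn (bA j)) '' sA) := by
    rw [hS, Submodule.map_span, Set.image_image]
  have hfS : finrank ℂ S = sA.card := by
    rw [hSspan]; exact finrank_span_orthonormal hvo sA
  have hfT : finrank ℂ T = sH.card := finrank_span_orthonormal bH.orthonormal sH
  have hdim : finrank ℂ (EuclideanSpace ℂ (Fin n)) < finrank ℂ S + finrank ℂ T := by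
    rw [hfS, hfT, finrank_euclideanSpace, Fintype.card_fin]
    exact hcard
  obtain ⟨x, hx0, hxS, hxT⟩ := exists_ne_zero_mem_inf S T hdim
  obtain ⟨y, hy, rfl⟩ := hxS
  refine ⟨y, ?_, hy, hxT⟩
  rintro rfl
  exact hx0 (map_zero _)

lemma interlace_le (hmn : m ≤ n)
    (H : Matrix (Fin n) (Fin n) ℂ) (hH : H.IsHermitian)
    (A : Matrix (Fin m) (Fin m) ℂ)
    (hAdef : A = H.submatrix (Fin.castLE hmn) (Fin.castLE hmn))
    (hA : A.IsHermitian)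
    (sA : Finset (Fin m)) (sH : Finset (Fin n)) (hcard : n < sA.card + sH.card)
    (a b : ℝ)
    (h1 : ∀ j ∈ sA, a ≤ hA.eigenvalues j)
    (h2 : ∀ j ∈ sH, hH.eigenvalues j ≤ b) : a ≤ b := by
  obtain ⟨y, hy0, hyA, hyH⟩ := exists_common hmn H hH A hA sA sH hcard
  have hq : ⟪emb hmn y, Matrix.toEuclideanLin H (emb hmn y)⟫
      = ⟪y, Matrix.toEuclideanLin A y⟫ := by
    rw [hAdef]; exact emb_quad hmn H y
  have hlow := quad_ge A hA sA a h1 hyA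
  have hup := quad_le H hH sH b h2 hyH
  rw [hq, emb_norm] at hup
  have hn : (0:ℝ) < ‖y‖ ^ 2 := by
    have : ‖y‖ ≠ 0 := norm_ne_zero_iff.2 hy0
    positivity
  have : a * ‖y‖ ^ 2 ≤ b * ‖y‖ ^ 2 := le_trans hlow hup
  exact le_of_mul_le_mul_right (by linarith [this]) hn

lemma interlace_ge (hmn : m ≤ n)
    (H : Matrix (Fin n) (Fin n) ℂ) (hH : H.IsHermitian)
    (A : Matrix (Fin m) (Fin m) ℂ)
    (hAdef : A = H.submatrix (Fin.castLE hmn) (Fin.castLE hmn))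
    (hA : A.IsHermitian)
    (sA : Finset (Fin m)) (sH : Finset (Fin n)) (hcard : n < sA.card + sH.card)
    (a b : ℝ)
    (h1 : ∀ j ∈ sH, a ≤ hH.eigenvalues j)
    (h2 : ∀ j ∈ sA, hA.eigenvalues j ≤ b) : a ≤ b := by
  obtain ⟨y, hy0, hyA, hyH⟩ := exists_common hmn H hH A hA sA sH hcard
  have hq : ⟪emb hmn y, Matrix.toEuclideanLin H (emb hmn y)⟫
      = ⟪y, Matrix.toEuclideanLin A y⟫ := by
    rw [hAdef]; exact emb_quad hmn H y
  have hlow := quad_ge H hH sH a h1 hyH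
  have hup := quad_le A hA sA b h2 hyA
  rw [hq, emb_norm] at hlow
  have hn : (0:ℝ) < ‖y‖ ^ 2 := by
    have : ‖y‖ ≠ 0 := norm_ne_zero_iff.2 hy0
    positivity
  have : a * ‖y‖ ^ 2 ≤ b * ‖y‖ ^ 2 := le_trans hlow hup
  exact le_of_mul_le_mul_right (by linarith [this]) hn

end CauchyMain

theorem stmt_16 {m n : ℕ} (hmn : m ≤ n)
    (H : Matrix (Fin n) (Fin n) ℂ) (hH : H.IsHermitian)
    (A : Matrix (Fin m) (Fin m) ℂ)
    (hAdef : A = H.submatrix (Fin.castLE hmn) (Fin.castLE hmn))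
    (hA : A.IsHermitian)
    (μ : Fin n → ℝ) (eμ : Fin n ≃ Fin n)
    (hμ : ∀ i, μ i = hH.eigenvalues (eμ i)) (hμa : Antitone μ)
    (ν : Fin m → ℝ) (eν : Fin m ≃ Fin m)
    (hν : ∀ i, ν i = hA.eigenvalues (eν i)) (hνa : Antitone ν) :
    ∀ i : Fin m,
      μ ⟨n - m + i.val, by have := i.isLt; omega⟩ ≤ ν i ∧
      ν i ≤ μ ⟨i.val, by have := i.isLt; omega⟩ := by
  intro i
  have him : (i : ℕ) < m := i.isLt
  constructor
  · -- μ (n - m + i) ≤ ν i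
    set k : Fin n := ⟨n - m + i.val, by omega⟩
    refine interlace_ge hmn H hH A hAdef hA
      ((Finset.Ici i).image eν) ((Finset.Iic k).image eμ) ?_ _ _ ?_ ?_
    · rw [Finset.card_image_of_injective _ eν.injective,
        Finset.card_image_of_injective _ eμ.injective, Fin.card_Ici, Fin.card_Iic]
      show n < (m - i.val) + (k.val + 1)
      simp only [k]
      omega
    · intro j' hj'
      obtain ⟨j, hj, rfl⟩ := Finset.mem_image.1 hj'
      rw [← hμ j]
      exact hμa (Finset.mem_Iic.1 hj)
    · intro j' hj'
      obtain ⟨j, hj, rfl⟩ := Finset.mem_image.1 hj'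
      rw [← hν j]
      exact hνa (Finset.mem_Ici.1 hj)
  · -- ν i ≤ μ i
    set k : Fin n := ⟨i.val, by omega⟩
    refine interlace_le hmn H hH A hAdef hA
      ((Finset.Iic i).image eν) ((Finset.Ici k).image eμ) ?_ _ _ ?_ ?_
    · rw [Finset.card_image_of_injective _ eν.injective,
        Finset.card_image_of_injective _ eμ.injective, Fin.card_Iic, Fin.card_Ici]
      show n < (i.val + 1) + (n - k.val)
      simp only [k]
      omega
    · intro j' hj'
      obtain ⟨j, hj, rfl⟩ := Finset.mem_image.1 hj'
      rw [← hν j]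
      exact hνa (Finset.mem_Iic.1 hj)
    · intro j' hj'
      obtain ⟨j, hj, rfl⟩ := Finset.mem_image.1 hj'
      rw [← hμ j]
      exact hμa (Finset.mem_Ici.1 hj)
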